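/- arXiv:2009.14495 — 3 statements merged into one kernel-verified Lean document; each statement's English description precedes it below -/
import Mathlib

section
/- Consider s ≥ 2 agents with differentiable discrete Lagrangians L_i^d : ℝ^n × ℝ^n → ℝ, differentiable discrete potentials V_ij^d : ℝ^n × ℝ^n → ℝ defined for j ∈ N_i and satisfying V_ij^d(x,y) = V_ji^d(y,x), and discrete forces F_{ij,d}^−, F_{ij,d}^+ : ℝ^n × ℝ^n × ℝ^n × ℝ^n → ℝ^n. Let N ≥ 2 and let q_k = (q_k^1,…,q_k^s) ∈ (ℝ^n)^s for k = 0,…,N. Then the following are equivalent: (i) for every choice of δ_k = (δ_k^1,…,δ_k^s) ∈ (ℝ^n)^s, k = 0,…,N, with δ_0 = δ_N = 0, one has Σ_{k=0}^{N−1} Σ_{i=1}^{s} [ D₁L_i^d(q_k^i,q_{k+1}^i)·δ_k^i + D₂L_i^d(q_k^i,q_{k+1}^i)·δ_{k+1}^i − (1/2) Σ_{j∈N_i} ( D₁V_ij^d(q_k^i,q_k^j)·δ_k^i + D₂V_ij^d(q_k^i,q_k^j)·δ_k^j ) + Σ_{j∈N_i} ( F_{ij,d}^−(q_k^i,q_k^j,q_{k+1}^i,q_{k+1}^j)·δ_k^i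 + F_{ij,d}^+(q_k^i,q_k^j,q_{k+1}^i,q_{k+1}^j)·δ_{k+1}^i ) ] = 0; (ii) for every k = 1,…,N−1 and every i = 1,…,s: D₂L_i^d(q_{k−1}^i,q_k^i) + D₁L_i^d(q_k^i,q_{k+1}^i) − Σ_{j∈N_i} D₁V_ij^d(q_k^i,q_k^j) + Σ_{j∈N_i} ( F_{ij,d}^+(q_{k−1}^i,q_{k−1}^j,q_k^i,q_k^j) + F_{ij,d}^−(q_k^i,q_k^j,q_{k+1}^i,q_{k+1}^j) ) = 0. -/
open scoped RealInnerProductSpace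

/-- Multi-agent discrete Lagrange–d'Alembert principle (stationarity of the
multi-agent discrete action sum with discrete potentials and discrete virtual work, under all
variations fixing the endpoints) is equivalent to the multi-agent forced discrete
Euler–Lagrange equations. -/
theorem multiagent_forced_discrete_euler_lagrange_iff_discrete_dalembert
    {n s : ℕ} (hs : 2 ≤ s)
    (Nb : Fin s → Finset (Fin s))
    (hNb_irrefl : ∀ i, i ∉ Nb i)
    (hNb_symm : ∀ i j, j ∈ Nb i ↔ i ∈ Nb j)
    (Ld : Fin s → EuclideanSpace ℝ (Fin n) × EuclideanSpace ℝ (Fin n) → ℝ)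
    (hLd : ∀ i, Differentiable ℝ (Ld i))
    (Vd : Fin s → Fin s → EuclideanSpace ℝ (Fin n) × EuclideanSpace ℝ (Fin n) → ℝ)
    (hVd : ∀ i j, j ∈ Nb i → Differentiable ℝ (Vd i j))
    (hVdsymm : ∀ i j, j ∈ Nb i → ∀ x y, Vd i j (x, y) = Vd j i (y, x))
    (Fm Fp : Fin s → Fin s →
      EuclideanSpace ℝ (Fin n) × EuclideanSpace ℝ (Fin n) × EuclideanSpace ℝ (Fin n) ×
        EuclideanSpace ℝ (Fin n) → EuclideanSpace ℝ (Fin n))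
    (N : ℕ) (hN : 2 ≤ N)
    (q : ℕ → Fin s → EuclideanSpace ℝ (Fin n)) :
    (∀ δ : ℕ → Fin s → EuclideanSpace ℝ (Fin n), δ 0 = 0 → δ N = 0 →
      ∑ k ∈ Finset.range N, ∑ i,
        (⟪gradient (fun x => Ld i (x, q (k+1) i)) (q k i), δ k i⟫
          + ⟪gradient (fun y => Ld i (q k i, y)) (q (k+1) i), δ (k+1) i⟫
          - (1/2) * ∑ j ∈ Nb i,
              (⟪gradient (fun x => Vd i j (x, q k j)) (q k i), δ k i⟫
                + ⟪gradient (fun y => Vd i j (q k i, y)) (q k j), δ k j⟫)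
          + ∑ j ∈ Nb i,
              (⟪Fm i j (q k i, q k j, q (k+1) i, q (k+1) j), δ k i⟫
                + ⟪Fp i j (q k i, q k j, q (k+1) i, q (k+1) j), δ (k+1) i⟫)) = 0)
    ↔ (∀ k : ℕ, 1 ≤ k → k ≤ N - 1 → ∀ i,
        gradient (fun y => Ld i (q (k-1) i, y)) (q k i)
          + gradient (fun x => Ld i (x, q (k+1) i)) (q k i)
          - ∑ j ∈ Nb i, gradient (fun x => Vd i j (x, q k j)) (q k i)
          + ∑ j ∈ Nb i,
              (Fp i j (q (k-1) i, q (k-1) j, q k i, q k j)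
                + Fm i j (q k i, q k j, q (k+1) i, q (k+1) j)) = 0) := by
  classical
  -- the Euler–Lagrange expression
  let E : ℕ → Fin s → EuclideanSpace ℝ (Fin n) := fun k i =>
    gradient (fun y => Ld i (q (k-1) i, y)) (q k i)
      + gradient (fun x => Ld i (x, q (k+1) i)) (q k i)
      - ∑ j ∈ Nb i, gradient (fun x => Vd i j (x, q k j)) (q k i)
      + ∑ j ∈ Nb i,
          (Fp i j (q (k-1) i, q (k-1) j, q k i, q k j)
            + Fm i j (q k i, q k j, q (k+1) i, q (k+1) j))
  -- coefficients of δ k and δ (k+1) coming from the k-th action term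
  let α : ℕ → Fin s → EuclideanSpace ℝ (Fin n) := fun k i =>
    gradient (fun x => Ld i (x, q (k+1) i)) (q k i)
      - ∑ j ∈ Nb i, gradient (fun x => Vd i j (x, q k j)) (q k i)
      + ∑ j ∈ Nb i, Fm i j (q k i, q k j, q (k+1) i, q (k+1) j)
  let β : ℕ → Fin s → EuclideanSpace ℝ (Fin n) := fun k i =>
    gradient (fun y => Ld i (q k i, y)) (q (k+1) i)
      + ∑ j ∈ Nb i, Fp i j (q k i, q k j, q (k+1) i, q (k+1) j)
  have hE : ∀ k, 1 ≤ k → ∀ i, E k i = α k i + β (k-1) i := by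
    intro k hk i
    show gradient (fun y => Ld i (q (k-1) i, y)) (q k i)
        + gradient (fun x => Ld i (x, q (k+1) i)) (q k i)
        - ∑ j ∈ Nb i, gradient (fun x => Vd i j (x, q k j)) (q k i)
        + ∑ j ∈ Nb i, (Fp i j (q (k-1) i, q (k-1) j, q k i, q k j)
              + Fm i j (q k i, q k j, q (k+1) i, q (k+1) j))
      = (gradient (fun x => Ld i (x, q (k+1) i)) (q k i)
        - ∑ j ∈ Nb i, gradient (fun x => Vd i j (x, q k j)) (q k i)
        + ∑ j ∈ Nb i, Fm i j (q k i, q k j, q (k+1) i, q (k+1) j))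
        + (gradient (fun y => Ld i (q (k-1) i, y)) (q ((k-1)+1) i)
        + ∑ j ∈ Nb i, Fp i j (q (k-1) i, q (k-1) j, q ((k-1)+1) i, q ((k-1)+1) j))
    rw [Nat.sub_add_cancel hk, Finset.sum_add_distrib]
    abel
  have key : ∀ δ : ℕ → Fin s → EuclideanSpace ℝ (Fin n), δ 0 = 0 → δ N = 0 →
      (∑ k ∈ Finset.range N, ∑ i,
        (⟪gradient (fun x => Ld i (x, q (k+1) i)) (q k i), δ k i⟫
          + ⟪gradient (fun y => Ld i (q k i, y)) (q (k+1) i), δ (k+1) i⟫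
          - (1/2) * ∑ j ∈ Nb i,
              (⟪gradient (fun x => Vd i j (x, q k j)) (q k i), δ k i⟫
                + ⟪gradient (fun y => Vd i j (q k i, y)) (q k j), δ k j⟫)
          + ∑ j ∈ Nb i,
              (⟪Fm i j (q k i, q k j, q (k+1) i, q (k+1) j), δ k i⟫
                + ⟪Fp i j (q k i, q k j, q (k+1) i, q (k+1) j), δ (k+1) i⟫)))
      = ∑ k ∈ Finset.Ico 1 N, ∑ i, ⟪E k i, δ k i⟫ := by
    intro δ h0 hN0
    -- symmetrization of the cross potential term
    have sym : ∀ k,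
        (∑ i, ∑ j ∈ Nb i, ⟪gradient (fun y => Vd i j (q k i, y)) (q k j), δ k j⟫)
          = ∑ i, ∑ j ∈ Nb i, ⟪gradient (fun x => Vd i j (x, q k j)) (q k i), δ k i⟫ := by
      intro k
      have step1 : (∑ i, ∑ j ∈ Nb i, ⟪gradient (fun y => Vd i j (q k i, y)) (q k j), δ k j⟫)
          = ∑ i, ∑ j ∈ Nb i, ⟪gradient (fun y => Vd j i (y, q k i)) (q k j), δ k j⟫ := by
        refine Finset.sum_congr rfl fun i _ => Finset.sum_congr rfl fun j hj => ?_
        congr 2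
        funext y
        exact hVdsymm i j hj (q k i) y
      rw [step1]
      rw [Finset.sum_comm' (t' := Finset.univ) (s' := Nb)
        (f := fun i j => ⟪gradient (fun y => Vd j i (y, q k i)) (q k j), δ k j⟫)
        (fun x y => by simp [hNb_symm x y])]
    -- rewrite each action term in αβ form
    have stepA : ∀ k, (∑ i : Fin s,
        (⟪gradient (fun x => Ld i (x, q (k+1) i)) (q k i), δ k i⟫
          + ⟪gradient (fun y => Ld i (q k i, y)) (q (k+1) i), δ (k+1) i⟫
          - (1/2) * ∑ j ∈ Nb i,
              (⟪gradient (fun x => Vd i j (x, q k j)) (q k i), δ k i⟫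
                + ⟪gradient (fun y => Vd i j (q k i, y)) (q k j), δ k j⟫)
          + ∑ j ∈ Nb i,
              (⟪Fm i j (q k i, q k j, q (k+1) i, q (k+1) j), δ k i⟫
                + ⟪Fp i j (q k i, q k j, q (k+1) i, q (k+1) j), δ (k+1) i⟫)))
        = ∑ i, (⟪α k i, δ k i⟫ + ⟪β k i, δ (k+1) i⟫) := by
      intro k
      have expand : ∀ i : Fin s,
          (⟪gradient (fun x => Ld i (x, q (k+1) i)) (q k i), δ k i⟫
            + ⟪gradient (fun y => Ld i (q k i, y)) (q (k+1) i), δ (k+1) i⟫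
            - (1/2) * ∑ j ∈ Nb i,
                (⟪gradient (fun x => Vd i j (x, q k j)) (q k i), δ k i⟫
                  + ⟪gradient (fun y => Vd i j (q k i, y)) (q k j), δ k j⟫)
            + ∑ j ∈ Nb i,
                (⟪Fm i j (q k i, q k j, q (k+1) i, q (k+1) j), δ k i⟫
                  + ⟪Fp i j (q k i, q k j, q (k+1) i, q (k+1) j), δ (k+1) i⟫))
          = (⟪α k i, δ k i⟫ + ⟪β k i, δ (k+1) i⟫)
            + (1/2) * (∑ j ∈ Nb i, ⟪gradient (fun x => Vd i j (x, q k j)) (q k i), δ k i⟫)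
            - (1/2) * (∑ j ∈ Nb i, ⟪gradient (fun y => Vd i j (q k i, y)) (q k j), δ k j⟫) := by
        intro i
        show _ = (⟪_ - _ + _, _⟫ + ⟪_ + _, _⟫) + _ - _
        rw [inner_add_left, inner_sub_left, inner_add_left, sum_inner, sum_inner, sum_inner]
        rw [Finset.sum_add_distrib, Finset.sum_add_distrib]
        ring
      rw [Finset.sum_congr rfl fun i _ => expand i]
      rw [Finset.sum_sub_distrib, Finset.sum_add_distrib, ← Finset.mul_sum, ← Finset.mul_sum,
        sym k]
      ring
    rw [Finset.sum_congr rfl fun k _ => stepA k]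
    rw [Finset.sum_congr rfl fun (k : ℕ) _ =>
      (Finset.sum_add_distrib (s := Finset.univ)
        (f := fun i => ⟪α k i, δ k i⟫) (g := fun i => ⟪β k i, δ (k+1) i⟫))]
    rw [Finset.sum_add_distrib]
    have h1 : (∑ k ∈ Finset.range N, ∑ i, ⟪α k i, δ k i⟫)
        = ∑ k ∈ Finset.Ico 1 N, ∑ i, ⟪α k i, δ k i⟫ := by
      rw [Finset.range_eq_Ico, Finset.sum_eq_sum_Ico_succ_bot (by omega)]
      simp [h0]
    have h2 : (∑ k ∈ Finset.range N, ∑ i, ⟪β k i, δ (k+1) i⟫)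
        = ∑ k ∈ Finset.Ico 1 N, ∑ i, ⟪β (k-1) i, δ k i⟫ := by
      have e1 : (∑ k ∈ Finset.Ico 1 (N+1), ∑ i, ⟪β (k-1) i, δ k i⟫)
          = ∑ k ∈ Finset.range N, ∑ i, ⟪β k i, δ (k+1) i⟫ := by
        rw [Finset.sum_Ico_eq_sum_range]
        simp only [Nat.add_sub_cancel]
        refine Finset.sum_congr rfl fun k _ => ?_
        rw [Nat.add_comm 1 k]
        simp
      rw [← e1, Finset.sum_Ico_succ_top (by omega)]
      simp [hN0]
    rw [h1, h2, ← Finset.sum_add_distrib]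
    refine Finset.sum_congr rfl fun k hk => ?_
    rw [← Finset.sum_add_distrib]
    refine Finset.sum_congr rfl fun i _ => ?_
    rw [hE k (Finset.mem_Ico.mp hk).1 i]
    exact (inner_add_left _ _ _).symm
  constructor
  · intro H k hk1 hk2 i
    show E k i = 0
    have hkN : k < N := by omega
    set δ : ℕ → Fin s → EuclideanSpace ℝ (Fin n) :=
      fun k' i' => if k' = k ∧ i' = i then E k i else 0 with hδ
    have hδ0 : δ 0 = 0 := by
      funext i'
      simp only [hδ]
      rw [if_neg (by rintro ⟨h, -⟩; omega)]
      rfl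
    have hδN : δ N = 0 := by
      funext i'
      simp only [hδ]
      rw [if_neg (by rintro ⟨h, -⟩; omega)]
      rfl
    have hz := H δ hδ0 hδN
    rw [key δ hδ0 hδN] at hz
    rw [Finset.sum_eq_single k (fun k' _ hk' => Finset.sum_eq_zero fun i' _ => by
        simp only [hδ]
        rw [if_neg (fun h => hk' h.1), inner_zero_right])
      (fun hks => absurd (Finset.mem_Ico.mpr ⟨hk1, hkN⟩) hks)] at hz
    rw [Fintype.sum_eq_single i (fun i' hi' => by
        simp only [hδ]
        rw [if_neg (fun h => hi' h.2), inner_zero_right])] at hz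
    simp only [hδ] at hz
    simp only [and_self, if_true] at hz
    exact inner_self_eq_zero.mp hz
  · intro hEL δ h0 hN0
    rw [key δ h0 hN0]
    refine Finset.sum_eq_zero fun k hk => Finset.sum_eq_zero fun i _ => ?_
    have hk' := Finset.mem_Ico.mp hk
    have : E k i = 0 := hEL k hk'.1 (by omega) i
    rw [this, inner_zero_left]
end

section
/- Let q = (q_1,…,q_s) : [0,T] → (ℝ^n)^s be a C² solution of the distance-based shape control system with flocking behavior: q̈_i = −Σ_{j∈N_i} [ (‖q_i−q_j‖² − d_ij²)(q_i−q_j) + (q̇_i−q̇_j) ] for every i, where d_ij = d_ji > 0. Define the total energy E(t) = Σ_{i=1}^{s} (1/2)‖q̇_i(t)‖² + (1/2) Σ_{i=1}^{s} Σ_{j∈N_i} (1/4)(‖q_i(t)−q_j(t)‖² − d_ij²)². Then for all t ∈ [0,T], E'(t) = −(1/2) Σ_{i=1}^{s} Σ_{j∈N_i} ‖q̇_i(t) − q̇_j(t)‖² ≤ 0; in particular, E is nonincreasing on [0,T]. -/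
open scoped RealInnerProductSpace

/-- Swap lemma for double sums over a symmetric neighbor relation. -/
lemma sum_nb_swap' {s : ℕ} (Nb : Fin s → Finset (Fin s))
    (hNb : ∀ i j, j ∈ Nb i ↔ i ∈ Nb j) (F : Fin s → Fin s → ℝ) :
    ∑ i, ∑ j ∈ Nb i, F i j = ∑ i, ∑ j ∈ Nb i, F j i := by
  have key : ∀ G : Fin s → Fin s → ℝ,
      ∑ i, ∑ j ∈ Nb i, G i j = ∑ i, ∑ j, if j ∈ Nb i then G i j else 0 := by
    intro G
    refine Finset.sum_congr rfl fun i _ => ?_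
    rw [Finset.sum_ite_mem, Finset.univ_inter]
  rw [key, key, Finset.sum_comm]
  refine Finset.sum_congr rfl fun i _ => Finset.sum_congr rfl fun j _ => ?_
  exact if_congr (hNb j i) rfl rfl

/-- Along any C² solution of the distance-based shape control system with flocking
behavior, the total energy `E(t) = Σᵢ ½‖q̇ᵢ‖² + ½ Σᵢ Σ_{j∈N_i} ¼(‖qᵢ−q_j‖² − d_ij²)²` satisfies
`E'(t) = −½ Σᵢ Σ_{j∈N_i} ‖q̇ᵢ − q̇_j‖² ≤ 0`; in particular `E` is nonincreasing on `[0,T]`. -/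
theorem energy_dissipation_shape_control_flocking
    {n s : ℕ} (hs : 2 ≤ s)
    (Nb : Fin s → Finset (Fin s))
    (hNb_irrefl : ∀ i, i ∉ Nb i)
    (hNb_symm : ∀ i j, j ∈ Nb i ↔ i ∈ Nb j)
    (d : Fin s → Fin s → ℝ)
    (hd_symm : ∀ i j, d i j = d j i)
    (hd_pos : ∀ i j, j ∈ Nb i → 0 < d i j)
    (T : ℝ) (hT : 0 < T)
    (q : ℝ → Fin s → EuclideanSpace ℝ (Fin n)) (hq : ContDiff ℝ 2 q)
    (hODE : ∀ i, ∀ t ∈ Set.Icc (0:ℝ) T,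
      deriv (deriv q) t i
        = -∑ j ∈ Nb i,
            ((‖q t i - q t j‖^2 - (d i j)^2) • (q t i - q t j)
              + (deriv q t i - deriv q t j))) :
    (∀ t ∈ Set.Icc (0:ℝ) T,
      deriv (fun τ => ∑ i, (1/2) * ‖deriv q τ i‖^2
          + (1/2) * ∑ i, ∑ j ∈ Nb i, (1/4) * (‖q τ i - q τ j‖^2 - (d i j)^2)^2) t
        = -(1/2) * ∑ i, ∑ j ∈ Nb i, ‖deriv q t i - deriv q t j‖^2
      ∧ -(1/2) * ∑ i, ∑ j ∈ Nb i, ‖deriv q t i - deriv q t j‖^2 ≤ 0)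
    ∧ AntitoneOn (fun t => ∑ i, (1/2) * ‖deriv q t i‖^2
        + (1/2) * ∑ i, ∑ j ∈ Nb i, (1/4) * (‖q t i - q t j‖^2 - (d i j)^2)^2)
        (Set.Icc (0:ℝ) T) := by
  -- basic differentiability
  have hq2 : ContDiff ℝ ((1:WithTop ℕ∞) + 1) q := by
    exact_mod_cast hq
  have hqd : Differentiable ℝ q := (contDiff_succ_iff_deriv.mp hq2).1
  have hvd : Differentiable ℝ (deriv q) :=
    (contDiff_succ_iff_deriv.mp hq2).2.2.differentiable one_ne_zero
  -- inner-product form of the energy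
  set Efun : ℝ → ℝ := fun τ =>
      (∑ i, (1/2) * ⟪deriv q τ i, deriv q τ i⟫)
      + (1/2) * ∑ i, ∑ j ∈ Nb i,
          (1/4) * (⟪q τ i - q τ j, q τ i - q τ j⟫ - (d i j)^2)^2 with hEfun
  have hfe : (fun τ => ∑ i, (1/2) * ‖deriv q τ i‖^2
      + (1/2) * ∑ i, ∑ j ∈ Nb i, (1/4) * (‖q τ i - q τ j‖^2 - (d i j)^2)^2) = Efun := by
    funext τ
    simp only [hEfun, ← real_inner_self_eq_norm_sq]
  -- derivative of the energy at every point
  have key : ∀ t : ℝ, HasDerivAt Efun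
      ((∑ i, (1/2) * (⟪deriv q t i, deriv (deriv q) t i⟫
          + ⟪deriv (deriv q) t i, deriv q t i⟫))
        + (1/2) * ∑ i, ∑ j ∈ Nb i,
            (1/4) * ((2:ℕ) * (⟪q t i - q t j, q t i - q t j⟫ - (d i j)^2)^1
              * ((⟪q t i - q t j, deriv q t i - deriv q t j⟫
                  + ⟪deriv q t i - deriv q t j, q t i - q t j⟫)))) t := by
    intro t
    have hq' : HasDerivAt q (deriv q t) t := (hqd t).hasDerivAt
    have hv' : HasDerivAt (deriv q) (deriv (deriv q) t) t := (hvd t).hasDerivAt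
    have hcomp : ∀ i : Fin s, HasDerivAt (fun τ => q τ i) (deriv q t i) t := fun i =>
      (ContinuousLinearMap.proj (R := ℝ)
        (φ := fun _ : Fin s => EuclideanSpace ℝ (Fin n)) i).hasFDerivAt.comp_hasDerivAt t hq'
    have hcompv : ∀ i : Fin s, HasDerivAt (fun τ => deriv q τ i) (deriv (deriv q) t i) t :=
      fun i => (ContinuousLinearMap.proj (R := ℝ)
        (φ := fun _ : Fin s => EuclideanSpace ℝ (Fin n)) i).hasFDerivAt.comp_hasDerivAt t hv'
    refine HasDerivAt.add ?_ (HasDerivAt.const_mul _ ?_)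
    · exact HasDerivAt.fun_sum fun i _ =>
        (((hcompv i).inner ℝ (hcompv i)).const_mul _)
    · refine HasDerivAt.fun_sum fun i _ => HasDerivAt.fun_sum fun j _ => ?_
      have hu : HasDerivAt (fun τ => q τ i - q τ j) (deriv q t i - deriv q t j) t :=
        (hcomp i).sub (hcomp j)
      have hX : HasDerivAt
          (fun τ => ⟪q τ i - q τ j, q τ i - q τ j⟫ - (d i j)^2)
          (⟪q t i - q t j, deriv q t i - deriv q t j⟫
            + ⟪deriv q t i - deriv q t j, q t i - q t j⟫) t :=
        ((hu.inner ℝ hu)).sub_const _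
      exact (hX.pow 2).const_mul _
  -- the first claim, at each t ∈ [0,T]
  have main : ∀ t ∈ Set.Icc (0:ℝ) T,
      deriv Efun t = -(1/2) * ∑ i, ∑ j ∈ Nb i, ‖deriv q t i - deriv q t j‖^2 := by
    intro t ht
    rw [(key t).deriv]
    set X : Fin s → Fin s → ℝ := fun i j =>
      ⟪q t i - q t j, q t i - q t j⟫ - (d i j)^2 with hXdef
    have hXsymm : ∀ i j, X j i = X i j := by
      intro i j
      simp only [hXdef]
      rw [show q t j - q t i = -(q t i - q t j) from (neg_sub _ _).symm, inner_neg_neg,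
        hd_symm j i]
    -- claim A
    have hA2 : (∑ i, ∑ j ∈ Nb i, X i j * ⟪deriv q t i, q t i - q t j⟫) * 2
        = ∑ i, ∑ j ∈ Nb i, X i j * ⟪q t i - q t j, deriv q t i - deriv q t j⟫ := by
      have hswap := sum_nb_swap' Nb hNb_symm
        (fun i j => X i j * ⟪deriv q t i, q t i - q t j⟫)
      calc (∑ i, ∑ j ∈ Nb i, X i j * ⟪deriv q t i, q t i - q t j⟫) * 2
          = (∑ i, ∑ j ∈ Nb i, X i j * ⟪deriv q t i, q t i - q t j⟫)
            + ∑ i, ∑ j ∈ Nb i, X j i * ⟪deriv q t j, q t j - q t i⟫ := by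
            rw [← hswap]; ring
        _ = _ := by
            rw [← Finset.sum_add_distrib]
            refine Finset.sum_congr rfl fun i _ => ?_
            rw [← Finset.sum_add_distrib]
            refine Finset.sum_congr rfl fun j _ => ?_
            rw [hXsymm i j,
              show q t j - q t i = -(q t i - q t j) from (neg_sub _ _).symm,
              inner_neg_right,
              real_inner_comm (deriv q t i - deriv q t j) (q t i - q t j),
              inner_sub_left]
            ring
    -- claim B
    have hB2 : (∑ i, ∑ j ∈ Nb i, ⟪deriv q t i, deriv q t i - deriv q t j⟫) * 2
        = ∑ i, ∑ j ∈ Nb i, ‖deriv q t i - deriv q t j‖^2 := by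
      have hswap := sum_nb_swap' Nb hNb_symm
        (fun i j => ⟪deriv q t i, deriv q t i - deriv q t j⟫)
      calc (∑ i, ∑ j ∈ Nb i, ⟪deriv q t i, deriv q t i - deriv q t j⟫) * 2
          = (∑ i, ∑ j ∈ Nb i, ⟪deriv q t i, deriv q t i - deriv q t j⟫)
            + ∑ i, ∑ j ∈ Nb i, ⟪deriv q t j, deriv q t j - deriv q t i⟫ := by
            rw [← hswap]; ring
        _ = _ := by
            rw [← Finset.sum_add_distrib]
            refine Finset.sum_congr rfl fun i _ => ?_
            rw [← Finset.sum_add_distrib]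
            refine Finset.sum_congr rfl fun j _ => ?_
            rw [← real_inner_self_eq_norm_sq,
              show deriv q t j - deriv q t i = -(deriv q t i - deriv q t j) from
                (neg_sub _ _).symm,
              inner_neg_right, inner_sub_left]
            ring
    -- kinetic term after substituting the ODE
    have hKstep : (∑ i, (1/2) * (⟪deriv q t i, deriv (deriv q) t i⟫
          + ⟪deriv (deriv q) t i, deriv q t i⟫))
        = -(∑ i, ∑ j ∈ Nb i, X i j * ⟪deriv q t i, q t i - q t j⟫)
          - ∑ i, ∑ j ∈ Nb i, ⟪deriv q t i, deriv q t i - deriv q t j⟫ := by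
      have step1 : ∀ i : Fin s, (1/2) * (⟪deriv q t i, deriv (deriv q) t i⟫
          + ⟪deriv (deriv q) t i, deriv q t i⟫)
          = -((∑ j ∈ Nb i, X i j * ⟪deriv q t i, q t i - q t j⟫)
              + ∑ j ∈ Nb i, ⟪deriv q t i, deriv q t i - deriv q t j⟫) := by
        intro i
        rw [real_inner_comm (deriv q t i) (deriv (deriv q) t i), hODE i t ht,
          inner_neg_right, inner_sum]
        rw [← Finset.sum_add_distrib]
        have : ∀ j ∈ Nb i, ⟪deriv q t i,
            (‖q t i - q t j‖^2 - (d i j)^2) • (q t i - q t j)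
              + (deriv q t i - deriv q t j)⟫
            = X i j * ⟪deriv q t i, q t i - q t j⟫
              + ⟪deriv q t i, deriv q t i - deriv q t j⟫ := by
          intro j _
          rw [inner_add_right, real_inner_smul_right]
          simp only [hXdef, real_inner_self_eq_norm_sq]
        rw [Finset.sum_congr rfl this]
        ring
      rw [Finset.sum_congr rfl fun i _ => step1 i]
      simp only [neg_add, Finset.sum_add_distrib, Finset.sum_neg_distrib]
      ring
    -- potential term simplification
    have hPstep : (∑ i, ∑ j ∈ Nb i,
          (1/4) * ((2:ℕ) * (X i j)^1
            * ((⟪q t i - q t j, deriv q t i - deriv q t j⟫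
                + ⟪deriv q t i - deriv q t j, q t i - q t j⟫))))
        = ∑ i, ∑ j ∈ Nb i, X i j * ⟪q t i - q t j, deriv q t i - deriv q t j⟫ := by
      refine Finset.sum_congr rfl fun i _ => Finset.sum_congr rfl fun j _ => ?_
      rw [real_inner_comm (deriv q t i - deriv q t j) (q t i - q t j)]
      push_cast
      ring
    rw [hKstep, hPstep]
    linarith [hA2, hB2]
  constructor
  · intro t ht
    refine ⟨by rw [hfe]; exact main t ht, ?_⟩
    have hnn : (0:ℝ) ≤ ∑ i, ∑ j ∈ Nb i, ‖deriv q t i - deriv q t j‖^2 :=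
      Finset.sum_nonneg fun i _ => Finset.sum_nonneg fun j _ => by positivity
    nlinarith
  · rw [hfe]
    have hdiff : Differentiable ℝ Efun := fun t => (key t).differentiableAt
    refine antitoneOn_of_deriv_nonpos (convex_Icc 0 T) hdiff.continuous.continuousOn
      (hdiff.differentiableOn) ?_
    intro x hx
    rw [interior_Icc] at hx
    rw [main x ⟨le_of_lt hx.1, le_of_lt hx.2⟩]
    have hnn : (0:ℝ) ≤ ∑ i, ∑ j ∈ Nb i, ‖deriv q x i - deriv q x j‖^2 :=
      Finset.sum_nonneg fun i _ => Finset.sum_nonneg fun j _ => by positivity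
    nlinarith
end

section
/- Let G be a finite simple graph on vertices {1,…,s} with Laplacian L, let n ≥ 1, h > 0, and write L̄ = L ⊗ I_n. Suppose d_ij = d_ji > 0 for neighbors, and define Γ : (ℝ^n)^s → (ℝ^n)^s by letting the i-th block of Γ(q) be Σ_{j∈N_i} (‖q_i − q_j‖² − d_ij²)(q_i − q_j). Let (q_k)_{k≥0} be a sequence in (ℝ^n)^s satisfying the variational-integrator update (I + hL̄) q_{k+1} = 2 q_k − (I − hL̄) q_{k−1} − (h²/2) Γ(q_k) for all k ≥ 1. Then the discrete total linear momentum is conserved: Σ_{i=1}^{s} (q_{k+1}^i − q_k^i) = Σ_{i=1}^{s} (q_1^i − q_0^i) for all k ≥ 0; equivalently, Σ_{i=1}^{s} q_k^i = Σ_{i=1}^{s} q_0^i + k Σ_{i=1}^{s} (q_1^i − q_0^i) for all k ≥ 0. -/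
open Matrix
open scoped Kronecker

/-- The explicit forced variational-integrator update
`(I + hL̄) q_{k+1} = 2 q_k − (I − hL̄) q_{k−1} − (h²/2) Γ(q_k)` (with `L̄ = L ⊗ Iₙ` built from the
graph Laplacian, and `Γ` the stacked distance-based control terms) conserves the discrete total
linear momentum: `Σᵢ (q_{k+1}ⁱ − q_kⁱ) = Σᵢ (q₁ⁱ − q₀ⁱ)` for all `k`; equivalently
`Σᵢ q_kⁱ = Σᵢ q₀ⁱ + k Σᵢ (q₁ⁱ − q₀ⁱ)`. -/
theorem variational_integrator_discrete_momentum_conservation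
    {n s : ℕ} (hn : 1 ≤ n)
    (G : SimpleGraph (Fin s)) [DecidableRel G.Adj]
    (Lap : Matrix (Fin s) (Fin s) ℝ)
    (hLap : ∀ i j : Fin s,
      Lap i j = if i = j then (G.degree i : ℝ) else if G.Adj i j then -1 else 0)
    (h : ℝ) (hh : 0 < h)
    (d : Fin s → Fin s → ℝ)
    (hd_symm : ∀ i j, d i j = d j i)
    (hd_pos : ∀ i j, G.Adj i j → 0 < d i j)
    (q : ℕ → Fin s → EuclideanSpace ℝ (Fin n))
    (hupdate : ∀ k : ℕ, 1 ≤ k → ∀ p : Fin s × Fin n,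
      ((1 : Matrix (Fin s × Fin n) (Fin s × Fin n) ℝ)
          + h • (Lap ⊗ₖ (1 : Matrix (Fin n) (Fin n) ℝ))).mulVec
          (fun p' => q (k+1) p'.1 p'.2) p
        = 2 * q k p.1 p.2
          - ((1 : Matrix (Fin s × Fin n) (Fin s × Fin n) ℝ)
              - h • (Lap ⊗ₖ (1 : Matrix (Fin n) (Fin n) ℝ))).mulVec
              (fun p' => q (k-1) p'.1 p'.2) p
          - (h^2/2) * ∑ j ∈ G.neighborFinset p.1,
              (‖q k p.1 - q k j‖^2 - (d p.1 j)^2) * (q k p.1 p.2 - q k j p.2)) :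
    (∀ k : ℕ, ∑ i, (q (k+1) i - q k i) = ∑ i, (q 1 i - q 0 i))
    ∧ (∀ k : ℕ, ∑ i, q k i = ∑ i, q 0 i + (k : ℝ) • ∑ i, (q 1 i - q 0 i)) := by
  classical
  -- column sums of the Laplacian vanish
  have hcol : ∀ j : Fin s, ∑ i, Lap i j = 0 := by
    intro j
    have hLap' : ∀ i, Lap i j
        = (if i = j then (G.degree j : ℝ) else 0) + (if G.Adj j i then -1 else 0) := by
      intro i
      rw [hLap]
      by_cases hij : i = j
      · subst hij; simp
      · have : G.Adj i j ↔ G.Adj j i := G.adj_comm i j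
        simp [hij, this]
    simp_rw [hLap', Finset.sum_add_distrib, Finset.sum_ite_eq', Finset.mem_univ, if_true]
    have h2 : ∑ i, (if G.Adj j i then (-1 : ℝ) else 0)
        = ∑ i ∈ G.neighborFinset j, (-1 : ℝ) := by
      rw [SimpleGraph.neighborFinset_eq_filter, Finset.sum_filter]
    rw [h2, Finset.sum_const, nsmul_eq_mul, G.card_neighborFinset_eq_degree j]
    ring
  -- weighted column sums vanish
  have hzero : ∀ x : Fin s → ℝ, ∑ i, ∑ j, Lap i j * x j = 0 := by
    intro x
    rw [Finset.sum_comm]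
    have : ∀ j : Fin s, ∑ i, Lap i j * x j = 0 := by
      intro j
      rw [← Finset.sum_mul, hcol j, zero_mul]
    simp [this]
  -- the control terms sum to zero in each coordinate
  have hGamma : ∀ (v : Fin s → EuclideanSpace ℝ (Fin n)) (c : Fin n),
      ∑ i, ∑ j ∈ G.neighborFinset i,
        (‖v i - v j‖^2 - (d i j)^2) * (v i c - v j c) = 0 := by
    intro v c
    set f : Fin s × Fin s → ℝ :=
      fun p => (‖v p.1 - v p.2‖^2 - (d p.1 p.2)^2) * (v p.1 c - v p.2 c) with hf
    have step : ∑ i, ∑ j ∈ G.neighborFinset i,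
        (‖v i - v j‖^2 - (d i j)^2) * (v i c - v j c)
        = ∑ p ∈ Finset.univ.filter (fun p : Fin s × Fin s => G.Adj p.1 p.2), f p := by
      rw [Finset.sum_filter, Fintype.sum_prod_type]
      refine Finset.sum_congr rfl fun i _ => ?_
      rw [SimpleGraph.neighborFinset_eq_filter, Finset.sum_filter]
    rw [step]
    refine Finset.sum_involution (fun p _ => (p.2, p.1)) ?_ ?_ ?_ ?_
    · intro p _
      simp only [hf]
      rw [norm_sub_rev (v p.2), hd_symm p.2 p.1]
      ring
    · intro p hp _ hcontra
      have h1 : p.2 = p.1 := congrArg Prod.fst hcontra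
      simp only [Finset.mem_filter, Finset.mem_univ, true_and] at hp
      rw [h1] at hp
      exact G.irrefl hp
    · intro p hp
      simp only [Finset.mem_filter, Finset.mem_univ, true_and] at hp ⊢
      exact hp.symm
    · intro p _; rfl
  -- mulVec with (1 + σ • (Lap ⊗ₖ 1)) computed blockwise
  have hmv : ∀ (σ : ℝ) (v : Fin s × Fin n → ℝ) (p : Fin s × Fin n),
      (((1 : Matrix (Fin s × Fin n) (Fin s × Fin n) ℝ)
          + σ • (Lap ⊗ₖ (1 : Matrix (Fin n) (Fin n) ℝ))).mulVec v) p
        = v p + σ * ∑ j, Lap p.1 j * v (j, p.2) := by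
    intro σ v p
    rw [Matrix.add_mulVec, Matrix.one_mulVec, Matrix.smul_mulVec]
    congr 1
    have : ((Lap ⊗ₖ (1 : Matrix (Fin n) (Fin n) ℝ)).mulVec v) p
        = ∑ j, Lap p.1 j * v (j, p.2) := by
      simp only [Matrix.mulVec, dotProduct, Fintype.sum_prod_type,
        Matrix.kroneckerMap_apply, Matrix.one_apply, mul_ite, mul_one, mul_zero,
        ite_mul, zero_mul]
      refine Finset.sum_congr rfl fun j _ => ?_
      simp
    simp [Pi.add_apply, Pi.smul_apply, this]
  have hmv' : ∀ (σ : ℝ) (v : Fin s × Fin n → ℝ) (p : Fin s × Fin n),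
      (((1 : Matrix (Fin s × Fin n) (Fin s × Fin n) ℝ)
          - σ • (Lap ⊗ₖ (1 : Matrix (Fin n) (Fin n) ℝ))).mulVec v) p
        = v p - σ * ∑ j, Lap p.1 j * v (j, p.2) := by
    intro σ v p
    have := hmv (-σ) v p
    rw [neg_smul, ← sub_eq_add_neg] at this
    rw [this]; ring
  -- per-coordinate sums
  set S : ℕ → Fin n → ℝ := fun k c => ∑ i, q k i c with hS
  -- the key recurrence on coordinate sums
  have hrec : ∀ k : ℕ, 1 ≤ k → ∀ c : Fin n, S (k+1) c = 2 * S k c - S (k-1) c := by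
    intro k hk c
    have hsum : ∑ i, (((1 : Matrix (Fin s × Fin n) (Fin s × Fin n) ℝ)
          + h • (Lap ⊗ₖ (1 : Matrix (Fin n) (Fin n) ℝ))).mulVec
          (fun p' => q (k+1) p'.1 p'.2)) (i, c)
        = ∑ i, (2 * q k i c
          - (((1 : Matrix (Fin s × Fin n) (Fin s × Fin n) ℝ)
              - h • (Lap ⊗ₖ (1 : Matrix (Fin n) (Fin n) ℝ))).mulVec
              (fun p' => q (k-1) p'.1 p'.2)) (i, c)
          - (h^2/2) * ∑ j ∈ G.neighborFinset i,
              (‖q k i - q k j‖^2 - (d i j)^2) * (q k i c - q k j c)) :=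
      Finset.sum_congr rfl fun i _ => hupdate k hk (i, c)
    simp only [hmv, hmv'] at hsum
    rw [Finset.sum_add_distrib] at hsum
    have hL1 : ∑ i, h * ∑ j, Lap i j * q (k+1) j c = 0 := by
      rw [← Finset.mul_sum, hzero (fun j => q (k+1) j c), mul_zero]
    rw [hL1, add_zero] at hsum
    have hrhs : ∑ i, (2 * q k i c
          - (q (k-1) i c - h * ∑ j, Lap i j * q (k-1) j c)
          - (h^2/2) * ∑ j ∈ G.neighborFinset i,
              (‖q k i - q k j‖^2 - (d i j)^2) * (q k i c - q k j c))
        = 2 * S k c - S (k-1) c := by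
      rw [Finset.sum_sub_distrib, Finset.sum_sub_distrib, Finset.sum_sub_distrib,
        ← Finset.mul_sum, ← Finset.mul_sum, ← Finset.mul_sum,
        hzero (fun j => q (k-1) j c), hGamma (q k) c]
      simp [hS]
    rw [hrhs] at hsum
    exact hsum
  -- discrete momentum conservation, coordinatewise
  have hmom : ∀ k : ℕ, ∀ c : Fin n, S (k+1) c - S k c = S 1 c - S 0 c := by
    intro k
    induction k with
    | zero => intro c; rfl
    | succ m ih =>
      intro c
      have := hrec (m+1) (Nat.le_add_left 1 m) c
      simp only [Nat.add_sub_cancel] at this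
      rw [this]
      have := ih c
      linarith
  -- lift to vector sums
  have part1 : ∀ k : ℕ, ∑ i, (q (k+1) i - q k i) = ∑ i, (q 1 i - q 0 i) := by
    intro k
    ext c
    have lhs : (∑ i, (q (k+1) i - q k i)) c = S (k+1) c - S k c := by
      rw [WithLp.ofLp_sum, Finset.sum_apply c Finset.univ]
      simp [hS, Finset.sum_sub_distrib]
    have rhs : (∑ i, (q 1 i - q 0 i)) c = S 1 c - S 0 c := by
      rw [WithLp.ofLp_sum, Finset.sum_apply c Finset.univ]
      simp [hS, Finset.sum_sub_distrib]
    rw [lhs, rhs]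
    exact hmom k c
  refine ⟨part1, ?_⟩
  intro k
  induction k with
  | zero => simp
  | succ m ih =>
    have : ∑ i, q (m+1) i = ∑ i, q m i + ∑ i, (q 1 i - q 0 i) := by
      have := part1 m
      rw [Finset.sum_sub_distrib] at this
      rw [← this]; abel
    rw [this, ih]
    push_cast
    rw [add_smul, one_smul]
    abel
end
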